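/- There are absolute constants c, C > 0 such that for all α, β ∈ T², c · d_{T²}(α∧β) ≤ (M(∂S(α)) M(∂S(β)))^{−1} ∫_{∂S(α)} ∫_{∂S(β)} d_{T²}(ξ∧ω) dM(ξ) dM(ω) ≤ C · d_{T²}(α∧β). -/

import Mathlib

open MeasureTheory ENNReal Real Filter
open scoped NNReal Classical

noncomputable section



/-- Vertices of the dyadic tree: finite binary strings. -/
abbrev V : Type := List Bool

/-- The boundary `∂T`: infinite binary sequences. -/
abbrev Bd : Type := ℕ → Bool

/-- Vertices of the bitree. -/
abbrev V2 : Type := V × V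

/-- `β ∈ T` is a prefix of the boundary point `ω ∈ ∂T`. -/
def bdle (ω : Bd) (β : V) : Prop := ∀ i : Fin β.length, ω i.1 = β.get i

/-- The cylinder `∂S(β) = {ω ∈ ∂T : ω ≤ β}`. -/
def cylB (β : V) : Set Bd := {ω | bdle ω β}

/-- `∂S(β) ⊆ (∂T)²` for `β ∈ T²`. -/
def cylB2 (β : V2) : Set (Bd × Bd) := cylB β.1 ×ˢ cylB β.2

/-- `d(x ∧ y)` for boundary points: the number of common ancestors, computed as the
number of `n` such that `x` and `y` agree on their first `n` letters (so it is `∞`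
when `x = y`). -/
def dB (x y : Bd) : ℝ≥0∞ := ∑' n : ℕ, if ∀ i < n, x i = y i then 1 else 0

/-- `d_{T²}(ξ ∧ ω) = d(ξ₁ ∧ ω₁) · d(ξ₂ ∧ ω₂)` for boundary points of the bitree. -/
def dB2 (ξ ω : Bd × Bd) : ℝ≥0∞ := dB ξ.1 ω.1 * dB ξ.2 ω.2

/-- `d(α ∧ β)` for vertices: the number of common prefixes of `α` and `β`. -/
def dVV (a b : V) : ℝ≥0∞ :=
  ∑' n : ℕ, if n ≤ a.length ∧ n ≤ b.length ∧ a.take n = b.take n then 1 else 0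

/-- `d_{T²}(α ∧ β)` for vertices of the bitree. -/
def dVV2 (α β : V2) : ℝ≥0∞ := dVV α.1 β.1 * dVV α.2 β.2

set_option maxHeartbeats 1000000

/-- Generalized cylinder: points agreeing with `f` on the first `n` letters. -/
def cyl (f : Bd) (n : ℕ) : Set Bd := {x | ∀ i < n, x i = f i}

lemma measurableSet_cyl (f : Bd) (n : ℕ) : MeasurableSet (cyl f n) := by
  have : cyl f n = ⋂ i ∈ Finset.range n, (fun x : Bd => x i) ⁻¹' {f i} := by
    ext x; simp [cyl]
  rw [this]
  exact Finset.measurableSet_biInter _ fun i _ =>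
    (measurable_pi_apply i) (measurableSet_singleton (f i))

lemma cylB_eq_cyl (b : V) : cylB b = cyl (fun i => b.getD i false) b.length := by
  ext x
  constructor
  · intro h i hi
    show x i = b.getD i false
    rw [List.getD_eq_getElem _ _ hi]
    exact h ⟨i, hi⟩
  · intro h i
    have := h i.1 i.2
    simp only [List.getD_eq_getElem _ _ i.2] at this
    simpa [List.get_eq_getElem] using this

lemma cylB_ofFn (f : Bd) (n : ℕ) : cylB (List.ofFn fun i : Fin n => f i) = cyl f n := by
  ext x
  constructor
  · intro h i hi
    have := h ⟨i, by simpa using hi⟩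
    simpa using this
  · intro h i
    have hi : (i : ℕ) < n := by have := i.2; simpa using this
    have := h i.1 hi
    simpa [List.get_ofFn] using this

lemma measure_cyl {M₀ : Measure Bd}
    (hM : ∀ β : V, M₀ (cylB β) = (2 : ℝ≥0∞) ^ (-(β.length : ℤ)))
    (f : Bd) (n : ℕ) : M₀ (cyl f n) = (2 : ℝ≥0∞) ^ (-(n : ℤ)) := by
  rw [← cylB_ofFn f n, hM]
  simp

lemma cyl_inter_agree {f g : Bd} {n m : ℕ} (h : ∀ i < min n m, f i = g i) :
    cyl f n ∩ cyl g m = cyl (fun i => if i < n then f i else g i) (max n m) := by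
  ext x
  constructor
  · rintro ⟨h1, h2⟩ i hi
    by_cases hin : i < n
    · simpa [hin] using h1 i hin
    · have him : i < m := by omega
      simpa [hin] using h2 i him
  · intro hx
    constructor
    · intro i hi
      simpa [hi] using hx i (by omega)
    · intro i hi
      by_cases hin : i < n
      · have := hx i (by omega)
        simp only [if_pos hin] at this
        rw [this]; exact h i (by omega)
      · simpa [hin] using hx i (by omega)

lemma cyl_inter_ne {f g : Bd} {n m : ℕ} (h : ¬ ∀ i < min n m, f i = g i) :
    cyl f n ∩ cyl g m = ∅ := by
  push_neg at h
  obtain ⟨i, hi, hne⟩ := h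
  ext x
  simp only [Set.mem_inter_iff, Set.mem_empty_iff_false, iff_false]
  rintro ⟨h1, h2⟩
  exact hne ((h1 i (by omega)).symm.trans (h2 i (by omega)))

lemma measure_cyl_inter {M₀ : Measure Bd}
    (hM : ∀ β : V, M₀ (cylB β) = (2 : ℝ≥0∞) ^ (-(β.length : ℤ)))
    (f g : Bd) (n m : ℕ) :
    M₀ (cyl f n ∩ cyl g m) =
      if ∀ i < min n m, f i = g i then (2 : ℝ≥0∞) ^ (-((max n m : ℕ) : ℤ)) else 0 := by
  by_cases h : ∀ i < min n m, f i = g i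
  · rw [if_pos h, cyl_inter_agree h, measure_cyl hM]
  · rw [if_neg h, cyl_inter_ne h, measure_empty]

lemma dB_eq_tsum_indicator (x y : Bd) :
    dB x y = ∑' n : ℕ, (cyl x n).indicator 1 y := by
  unfold dB
  congr 1; ext n
  have hmem : y ∈ cyl x n ↔ ∀ i < n, x i = y i := by simp [cyl, eq_comm]
  by_cases h : ∀ i < n, x i = y i
  · rw [if_pos h, Set.indicator_of_mem (hmem.mpr h)]; rfl
  · rw [if_neg h, Set.indicator_of_notMem (fun hy => h (hmem.mp hy))]

lemma measurable_dB_right (x : Bd) : Measurable (dB x) := by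
  have : dB x = fun y => ∑' n : ℕ, (cyl x n).indicator (1 : Bd → ℝ≥0∞) y := by
    ext y; exact dB_eq_tsum_indicator x y
  rw [this]
  exact Measurable.ennreal_tsum fun n =>
    (measurable_one.indicator (measurableSet_cyl x n))

/-- Inner integral formula. -/
lemma inner_integral {M₀ : Measure Bd}
    (hM : ∀ β : V, M₀ (cylB β) = (2 : ℝ≥0∞) ^ (-(β.length : ℤ)))
    (b : V) (x : Bd) :
    ∫⁻ y in cylB b, dB x y ∂M₀ =
      ∑' n : ℕ, (2 : ℝ≥0∞) ^ (-((max n b.length : ℕ) : ℤ)) *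
        (cyl (fun i => b.getD i false) (min n b.length)).indicator 1 x := by
  set g : Bd := fun i => b.getD i false with hg
  have h1 : ∫⁻ y in cylB b, dB x y ∂M₀
      = ∑' n : ℕ, ∫⁻ y in cylB b, (cyl x n).indicator 1 y ∂M₀ := by
    have hswap := lintegral_tsum (μ := M₀.restrict (cylB b))
      (f := fun n => (cyl x n).indicator (1 : Bd → ℝ≥0∞))
      (fun n => ((measurable_one.indicator (measurableSet_cyl x n)).aemeasurable))
    rw [← hswap]
    exact lintegral_congr fun y => dB_eq_tsum_indicator x y
  rw [h1]
  congr 1; ext n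
  rw [lintegral_indicator_one (measurableSet_cyl x n), cylB_eq_cyl,
    Measure.restrict_apply (measurableSet_cyl x n), measure_cyl_inter hM]
  by_cases h : ∀ i < min n b.length, x i = g i
  · rw [if_pos h, Set.indicator_of_mem (by exact h)]
    simp
  · rw [if_neg h, Set.indicator_of_notMem (by exact h), mul_zero]

lemma measurable_inner {M₀ : Measure Bd}
    (hM : ∀ β : V, M₀ (cylB β) = (2 : ℝ≥0∞) ^ (-(β.length : ℤ)))
    (b : V) : Measurable (fun x => ∫⁻ y in cylB b, dB x y ∂M₀) := by
  have : (fun x => ∫⁻ y in cylB b, dB x y ∂M₀)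
      = fun x => ∑' n : ℕ, (2 : ℝ≥0∞) ^ (-((max n b.length : ℕ) : ℤ)) *
        (cyl (fun i => b.getD i false) (min n b.length)).indicator 1 x := by
    ext x; exact inner_integral hM b x
  rw [this]
  exact Measurable.ennreal_tsum fun n =>
    (measurable_one.indicator (measurableSet_cyl _ _)).const_mul _

lemma take_eq_iff {a b : V} {n : ℕ} (ha : n ≤ a.length) (hb : n ≤ b.length) :
    a.take n = b.take n ↔ ∀ i < n, a.getD i false = b.getD i false := by
  have hla : ∀ i, i < n → i < a.length := fun i hi => lt_of_lt_of_le hi ha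
  have hlb : ∀ i, i < n → i < b.length := fun i hi => lt_of_lt_of_le hi hb
  constructor
  · intro h i hi
    rw [List.getD_eq_getElem _ _ (hla i hi), List.getD_eq_getElem _ _ (hlb i hi)]
    have h1 : (a.take n)[i]'(by simp; exact ⟨hi, hla i hi⟩) =
        (b.take n)[i]'(by simp; exact ⟨hi, hlb i hi⟩) := by
      congr 1
    rwa [List.getElem_take, List.getElem_take] at h1
  · intro h
    apply List.ext_getElem
    · simp; omega
    · intro i h1 h2
      have hi : i < n := by simp at h1; omega
      have := h i hi
      rw [List.getD_eq_getElem _ _ (hla i hi),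
          List.getD_eq_getElem _ _ (hlb i hi)] at this
      rw [List.getElem_take, List.getElem_take]
      exact this

lemma two_zpow_neg_natCast (k : ℕ) : (2:ℝ≥0∞)^(-(k:ℤ)) = 2⁻¹ ^ k := by
  rw [ENNReal.zpow_neg, ← ENNReal.inv_pow]
  norm_cast

/-- The raw double integral formula. -/
lemma J_eq {M₀ : Measure Bd}
    (hM : ∀ β : V, M₀ (cylB β) = (2 : ℝ≥0∞) ^ (-(β.length : ℤ)))
    (a b : V) :
    ∫⁻ x in cylB a, ∫⁻ y in cylB b, dB x y ∂M₀ ∂M₀ =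
      ∑' n : ℕ, if (∀ i < min (min n b.length) a.length,
          b.getD i false = a.getD i false) then
        (2 : ℝ≥0∞) ^ (-((max n b.length : ℕ) : ℤ)) *
          (2 : ℝ≥0∞) ^ (-((max (min n b.length) a.length : ℕ) : ℤ)) else 0 := by
  set g : Bd := fun i => b.getD i false with hg
  set f : Bd := fun i => a.getD i false with hf
  have step1 : ∫⁻ x in cylB a, ∫⁻ y in cylB b, dB x y ∂M₀ ∂M₀
      = ∑' n : ℕ, ∫⁻ x in cylB a, (2 : ℝ≥0∞) ^ (-((max n b.length : ℕ) : ℤ)) *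
          (cyl g (min n b.length)).indicator 1 x ∂M₀ := by
    have hswap := lintegral_tsum (μ := M₀.restrict (cylB a))
      (f := fun n x => (2 : ℝ≥0∞) ^ (-((max n b.length : ℕ) : ℤ)) *
          (cyl g (min n b.length)).indicator 1 x)
      (fun n => ((measurable_one.indicator
        (measurableSet_cyl g (min n b.length))).const_mul _).aemeasurable)
    rw [← hswap]
    exact lintegral_congr fun x => inner_integral hM b x
  rw [step1]
  congr 1; ext n
  rw [lintegral_const_mul _ (measurable_one.indicator
    (measurableSet_cyl g (min n b.length))),
    lintegral_indicator_one (measurableSet_cyl g (min n b.length)),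
    cylB_eq_cyl a,
    Measure.restrict_apply (measurableSet_cyl g (min n b.length)),
    measure_cyl_inter hM]
  rw [mul_ite, mul_zero]

lemma dVV_pos (a b : V) : 1 ≤ dVV a b := by
  have h0 : (if 0 ≤ a.length ∧ 0 ≤ b.length ∧ a.take 0 = b.take 0
      then (1:ℝ≥0∞) else 0) = 1 := by simp
  calc (1:ℝ≥0∞) = _ := h0.symm
    _ ≤ dVV a b := ENNReal.le_tsum 0

lemma one_dim {M₀ : Measure Bd}
    (hM : ∀ β : V, M₀ (cylB β) = (2 : ℝ≥0∞) ^ (-(β.length : ℤ)))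
    (a b : V) :
    dVV a b ≤ (2:ℝ≥0∞) ^ (((a.length + b.length : ℕ)) : ℤ) *
        ∫⁻ x in cylB a, ∫⁻ y in cylB b, dB x y ∂M₀ ∂M₀ ∧
      (2:ℝ≥0∞) ^ (((a.length + b.length : ℕ)) : ℤ) *
        ∫⁻ x in cylB a, ∫⁻ y in cylB b, dB x y ∂M₀ ∂M₀ ≤ 2 * dVV a b := by
  set m := a.length with hm
  set l := b.length with hl
  set s := min m l with hs
  rw [J_eq hM a b, ← ENNReal.tsum_mul_left]
  have hterm : ∀ n : ℕ,
      (2:ℝ≥0∞) ^ (((m + l : ℕ)) : ℤ) *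
        (if (∀ i < min (min n l) m, b.getD i false = a.getD i false) then
          (2 : ℝ≥0∞) ^ (-((max n l : ℕ) : ℤ)) *
            (2 : ℝ≥0∞) ^ (-((max (min n l) m : ℕ) : ℤ)) else 0)
      = (if n ≤ s ∧ n ≤ m ∧ n ≤ l ∧ a.take n = b.take n then 1 else 0)
        + (if s < n ∧ a.take s = b.take s
            then (2:ℝ≥0∞) ^ (-((n - s : ℕ) : ℤ)) else 0) := by
    intro n
    have hcond : (∀ i < min (min n l) m, b.getD i false = a.getD i false)
        ↔ a.take (min n s) = b.take (min n s) := by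
      rw [take_eq_iff (by omega) (by omega)]
      constructor
      · intro h i hi; exact (h i (by omega)).symm
      · intro h i hi; exact (h i (by omega)).symm
    simp only [hcond]
    have hzpow : (2:ℝ≥0∞) ^ (((m + l : ℕ)) : ℤ) *
        ((2 : ℝ≥0∞) ^ (-((max n l : ℕ) : ℤ)) *
          (2 : ℝ≥0∞) ^ (-((max (min n l) m : ℕ) : ℤ)))
        = (2:ℝ≥0∞) ^ (-((max n s - s : ℕ) : ℤ)) := by
      rw [← ENNReal.zpow_add two_ne_zero ofNat_ne_top,
          ← ENNReal.zpow_add two_ne_zero ofNat_ne_top]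
      congr 1
      push_cast
      omega
    rcases le_or_gt n s with hns | hns
    · have h1 : min n s = n := by omega
      have h2 : max n s - s = 0 := by omega
      rw [mul_ite, mul_zero, hzpow, h1, h2]
      have hsn : ¬ (s < n ∧ a.take s = b.take s) := fun h' => absurd h'.1 (by omega)
      rw [if_neg hsn, add_zero]
      by_cases h : a.take n = b.take n
      · rw [if_pos h, if_pos ⟨hns, by omega, by omega, h⟩]; norm_num
      · rw [if_neg h, if_neg (fun h' => h h'.2.2.2)]
    · have h1 : min n s = s := by omega
      have h2 : max n s = n := by omega
      rw [mul_ite, mul_zero, hzpow, h1, h2]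
      have hnle : ¬ (n ≤ s ∧ n ≤ m ∧ n ≤ l ∧ a.take n = b.take n) :=
        fun h' => absurd h'.1 (by omega)
      rw [if_neg hnle, zero_add]
      by_cases h : a.take s = b.take s
      · rw [if_pos h, if_pos ⟨hns, h⟩]
      · rw [if_neg h, if_neg (fun h' => h h'.2)]
  have hsum : (∑' n : ℕ, (2:ℝ≥0∞) ^ (((m + l : ℕ)) : ℤ) *
      (if (∀ i < min (min n l) m, b.getD i false = a.getD i false) then
        (2 : ℝ≥0∞) ^ (-((max n l : ℕ) : ℤ)) *
          (2 : ℝ≥0∞) ^ (-((max (min n l) m : ℕ) : ℤ)) else 0))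
      = (∑' n : ℕ, if n ≤ s ∧ n ≤ m ∧ n ≤ l ∧ a.take n = b.take n then 1 else 0)
        + ∑' n : ℕ, (if s < n ∧ a.take s = b.take s
            then (2:ℝ≥0∞) ^ (-((n - s : ℕ) : ℤ)) else 0) := by
    rw [← ENNReal.tsum_add]
    exact tsum_congr hterm
  rw [hsum]
  have hd : (∑' n : ℕ, if n ≤ s ∧ n ≤ m ∧ n ≤ l ∧ a.take n = b.take n
      then (1:ℝ≥0∞) else 0) = dVV a b := by
    unfold dVV
    apply tsum_congr
    intro n
    apply if_congr _ rfl rfl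
    constructor
    · rintro ⟨_, h2, h3, h4⟩; exact ⟨h2, h3, h4⟩
    · rintro ⟨h2, h3, h4⟩; exact ⟨by omega, h2, h3, h4⟩
  rw [hd]
  have hE : (∑' n : ℕ, (if s < n ∧ a.take s = b.take s
      then (2:ℝ≥0∞) ^ (-((n - s : ℕ) : ℤ)) else 0)) ≤ 1 := by
    have hle : ∀ n : ℕ, (if s < n ∧ a.take s = b.take s
        then (2:ℝ≥0∞) ^ (-((n - s : ℕ) : ℤ)) else 0)
        ≤ (if s < n then (2⁻¹:ℝ≥0∞) ^ (n - s) else 0) := by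
      intro n
      by_cases h : s < n ∧ a.take s = b.take s
      · rw [if_pos h, if_pos h.1, two_zpow_neg_natCast]
      · rw [if_neg h]
        exact zero_le
    refine le_trans (ENNReal.tsum_le_tsum hle) ?_
    have hsplit := Summable.sum_add_tsum_nat_add'
      (f := fun n => if s < n then (2⁻¹:ℝ≥0∞) ^ (n - s) else 0)
      (k := s+1) ENNReal.summable
    rw [← hsplit]
    have hfront : (∑ i ∈ Finset.range (s+1),
        if s < i then (2⁻¹:ℝ≥0∞) ^ (i - s) else 0) = 0 :=
      Finset.sum_eq_zero fun i hi => if_neg (by simp at hi; omega)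
    rw [hfront, zero_add]
    have htail : ∀ k : ℕ, (if s < k + (s+1) then (2⁻¹:ℝ≥0∞) ^ (k + (s+1) - s) else 0)
        = 2⁻¹ * (2⁻¹:ℝ≥0∞) ^ k := by
      intro k
      rw [if_pos (by omega), show k + (s+1) - s = k + 1 by omega, pow_succ, mul_comm]
    rw [tsum_congr htail, ENNReal.tsum_mul_left, ENNReal.tsum_geometric]
    rw [ENNReal.one_sub_inv_two, inv_inv, ENNReal.inv_mul_cancel two_ne_zero ofNat_ne_top]
  constructor
  · exact le_self_add
  · calc dVV a b + _ ≤ dVV a b + 1 := add_le_add_right hE _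
      _ ≤ dVV a b + dVV a b := add_le_add_right (dVV_pos a b) _
      _ = 2 * dVV a b := (two_mul _).symm

lemma factor {M₀ : Measure Bd} [SFinite M₀]
    (hM : ∀ β : V, M₀ (cylB β) = (2 : ℝ≥0∞) ^ (-(β.length : ℤ)))
    (α β : V2) :
    ∫⁻ ξ in cylB2 α, ∫⁻ ω in cylB2 β, dB2 ξ ω ∂(M₀.prod M₀) ∂(M₀.prod M₀)
      = (∫⁻ x in cylB α.1, ∫⁻ y in cylB β.1, dB x y ∂M₀ ∂M₀) *
        (∫⁻ x in cylB α.2, ∫⁻ y in cylB β.2, dB x y ∂M₀ ∂M₀) := by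
  have hinner : ∀ ξ : Bd × Bd, ∫⁻ ω in cylB2 β, dB2 ξ ω ∂(M₀.prod M₀)
      = (∫⁻ y in cylB β.1, dB ξ.1 y ∂M₀) * (∫⁻ y in cylB β.2, dB ξ.2 y ∂M₀) := by
    intro ξ
    rw [cylB2, ← Measure.prod_restrict]
    exact lintegral_prod_mul (measurable_dB_right ξ.1).aemeasurable
      (measurable_dB_right ξ.2).aemeasurable
  rw [lintegral_congr hinner, cylB2, ← Measure.prod_restrict]
  exact lintegral_prod_mul (measurable_inner hM β.1).aemeasurable
    (measurable_inner hM β.2).aemeasurable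

/-- `d_{T²}` is almost a martingale with respect to the coin-flipping measure
`M = M₀ × M₀`: the average of `d_{T²}(ξ ∧ ω)` over `ξ ∈ ∂S(α)`, `ω ∈ ∂S(β)` is
comparable, with absolute constants, to `d_{T²}(α ∧ β)`. -/
theorem dT2_almost_martingale :
    ∃ c C : ℝ≥0, 0 < c ∧ 0 < C ∧
      ∀ M₀ : Measure Bd, IsProbabilityMeasure M₀ →
        (∀ β : V, M₀ (cylB β) = (2 : ℝ≥0∞) ^ (-(β.length : ℤ))) →
        ∀ α β : V2,
          (c : ℝ≥0∞) * dVV2 α β ≤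
            ((M₀.prod M₀) (cylB2 α) * (M₀.prod M₀) (cylB2 β))⁻¹ *
              ∫⁻ ξ in cylB2 α, ∫⁻ ω in cylB2 β, dB2 ξ ω ∂(M₀.prod M₀) ∂(M₀.prod M₀) ∧
          ((M₀.prod M₀) (cylB2 α) * (M₀.prod M₀) (cylB2 β))⁻¹ *
              ∫⁻ ξ in cylB2 α, ∫⁻ ω in cylB2 β, dB2 ξ ω ∂(M₀.prod M₀) ∂(M₀.prod M₀)
            ≤ (C : ℝ≥0∞) * dVV2 α β := by
  refine ⟨1, 4, by norm_num, by norm_num, ?_⟩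
  intro M₀ hprob hM α β
  haveI := hprob
  have hmeas2 : ∀ γ : V2, (M₀.prod M₀) (cylB2 γ)
      = (2:ℝ≥0∞) ^ (-(γ.1.length : ℤ)) * (2:ℝ≥0∞) ^ (-(γ.2.length : ℤ)) := by
    intro γ
    rw [cylB2, Measure.prod_prod, hM, hM]
  have hN : ((M₀.prod M₀) (cylB2 α) * (M₀.prod M₀) (cylB2 β))⁻¹
      = (2:ℝ≥0∞) ^ (((α.1.length + β.1.length : ℕ)) : ℤ) *
        (2:ℝ≥0∞) ^ (((α.2.length + β.2.length : ℕ)) : ℤ) := by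
    rw [hmeas2 α, hmeas2 β,
      ← ENNReal.zpow_add two_ne_zero ofNat_ne_top,
      ← ENNReal.zpow_add two_ne_zero ofNat_ne_top,
      ← ENNReal.zpow_add two_ne_zero ofNat_ne_top,
      ← ENNReal.zpow_neg,
      ← ENNReal.zpow_add two_ne_zero ofNat_ne_top]
    congr 1
    push_cast
    ring
  rw [hN, factor hM α β]
  set J1 := ∫⁻ x in cylB α.1, ∫⁻ y in cylB β.1, dB x y ∂M₀ ∂M₀ with hJ1
  set J2 := ∫⁻ x in cylB α.2, ∫⁻ y in cylB β.2, dB x y ∂M₀ ∂M₀ with hJ2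
  have hre : (2:ℝ≥0∞) ^ (((α.1.length + β.1.length : ℕ)) : ℤ) *
        (2:ℝ≥0∞) ^ (((α.2.length + β.2.length : ℕ)) : ℤ) * (J1 * J2)
      = ((2:ℝ≥0∞) ^ (((α.1.length + β.1.length : ℕ)) : ℤ) * J1) *
        ((2:ℝ≥0∞) ^ (((α.2.length + β.2.length : ℕ)) : ℤ) * J2) :=
    mul_mul_mul_comm _ _ _ _
  rw [hre]
  have h1 := one_dim hM α.1 β.1
  have h2 := one_dim hM α.2 β.2
  constructor
  · have : dVV2 α β ≤ _ := mul_le_mul' h1.1 h2.1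
    simpa [dVV2] using this
  · have hle : ((2:ℝ≥0∞) ^ (((α.1.length + β.1.length : ℕ)) : ℤ) * J1) *
        ((2:ℝ≥0∞) ^ (((α.2.length + β.2.length : ℕ)) : ℤ) * J2)
        ≤ (2 * dVV α.1 β.1) * (2 * dVV α.2 β.2) := mul_le_mul' h1.2 h2.2
    refine hle.trans ?_
    have : (2 * dVV α.1 β.1) * (2 * dVV α.2 β.2)
        = 4 * (dVV α.1 β.1 * dVV α.2 β.2) := by
      rw [mul_mul_mul_comm]
      norm_num
    rw [this]
    simp [dVV2]

end
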